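/- Let β > 1, let m ≥ 1 and K ≥ 1, let x_i, μ_i, a_i (for i = 1,…,m) be positive reals, let γ_{ik} (for i = 1,…,m, k = 1,…,K) satisfy 0 ≤ γ_{ik} ≤ μ_i, and let λ_k ≥ 0 (for k = 1,…,K). Suppose the KKT stationarity conditions hold: for every i, (μ_i a_i)^{1-β}·x_i^{-β} = Σ_{k=1}^K λ_k γ_{ik} a_i; and the complementary-slackness identity holds: Σ_{k=1}^K λ_k·(Σ_{i=1}^m γ_{ik} x_i a_i) = Σ_{k=1}^K λ_k. Then for every i, μ_i a_i x_i ≥ 1/m. (Sharing Incentive is satisfied when β > 1 and λ = (β-1)/β.) -/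

import Mathlib

open Finset

/-- Sharing Incentive when `β > 1` and `λ = (β-1)/β`: under the KKT stationarity conditions
`(μ_i a_i)^{1-β} x_i^{-β} = Σ_k λ_k γ_{ik} a_i` and complementary slackness
`Σ_k λ_k (Σ_i γ_{ik} x_i a_i) = Σ_k λ_k`, every data analyst's weighted dominant share
satisfies `μ_i a_i x_i ≥ 1/m`. -/
theorem stmt4 (β : ℝ) (hβ : 1 < β) (m K : ℕ) (hm : 1 ≤ m) (hK : 1 ≤ K)
    (x μ a : Fin m → ℝ) (γ : Fin m → Fin K → ℝ) (lam : Fin K → ℝ)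
    (hx : ∀ i, 0 < x i) (hμ : ∀ i, 0 < μ i) (ha : ∀ i, 0 < a i)
    (hγ0 : ∀ i k, 0 ≤ γ i k) (hγμ : ∀ i k, γ i k ≤ μ i)
    (hlam : ∀ k, 0 ≤ lam k)
    (hstat : ∀ i, (μ i * a i) ^ (1 - β) * x i ^ (-β) = ∑ k, lam k * γ i k * a i)
    (hcs : ∑ k, lam k * ∑ i, γ i k * x i * a i = ∑ k, lam k) :
    ∀ i, (1 : ℝ) / m ≤ μ i * a i * x i := by
  set Λ : ℝ := ∑ k, lam k with hΛdef
  have hs : ∀ i, 0 < μ i * a i * x i := fun i =>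
    mul_pos (mul_pos (hμ i) (ha i)) (hx i)
  -- bound: Σ_k lam k * γ i k * a i ≤ Λ * (μ i * a i)
  have hbnd : ∀ i, ∑ k, lam k * γ i k * a i ≤ Λ * (μ i * a i) := by
    intro i
    rw [hΛdef, Finset.sum_mul]
    apply Finset.sum_le_sum
    intro k _
    calc lam k * γ i k * a i = lam k * (γ i k * a i) := by ring
      _ ≤ lam k * (μ i * a i) :=
        mul_le_mul_of_nonneg_left
          (mul_le_mul_of_nonneg_right (hγμ i k) (ha i).le) (hlam k)
  -- key: s_i ^ (-β) ≤ Λ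
  have hkey : ∀ i, (μ i * a i * x i) ^ (-β) ≤ Λ := by
    intro i
    have hma : 0 < μ i * a i := mul_pos (hμ i) (ha i)
    have h1 : (μ i * a i * x i) ^ (-β) * (μ i * a i)
        = (μ i * a i) ^ (1 - β) * x i ^ (-β) := by
      rw [Real.mul_rpow hma.le (hx i).le, show (1 - β : ℝ) = 1 + (-β) by ring,
        Real.rpow_add hma, Real.rpow_one]
      ring
    have h2 : (μ i * a i * x i) ^ (-β) * (μ i * a i) ≤ Λ * (μ i * a i) := by
      rw [h1, hstat i]; exact hbnd i
    exact le_of_mul_le_mul_right h2 hma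
  -- Λ > 0
  have hΛpos : 0 < Λ := by
    have i0 : Fin m := ⟨0, hm⟩
    have := hkey i0
    have h0 : (0:ℝ) < (μ i0 * a i0 * x i0) ^ (-β) :=
      Real.rpow_pos_of_pos (hs i0) _
    linarith
  -- Λ = Σ_i s_i ^ (1-β)
  have hΛsum : Λ = ∑ i, (μ i * a i * x i) ^ (1 - β) := by
    rw [← hcs]
    have step1 : ∑ k, lam k * ∑ i, γ i k * x i * a i
        = ∑ i, (∑ k, lam k * γ i k * a i) * x i := by
      simp_rw [Finset.mul_sum, Finset.sum_mul]
      rw [Finset.sum_comm]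
      apply Finset.sum_congr rfl; intro i _
      apply Finset.sum_congr rfl; intro k _
      ring
    rw [step1]
    apply Finset.sum_congr rfl
    intro i _
    have hma : 0 < μ i * a i := mul_pos (hμ i) (ha i)
    rw [← hstat i, Real.mul_rpow hma.le (hx i).le,
      show (1 - β : ℝ) = 1 + (-β) by ring, Real.rpow_add (hx i), Real.rpow_one]
    ring
  -- each s_i ≥ Λ ^ (-1/β)
  have hβ0 : (0:ℝ) < β := lt_trans one_pos hβ
  have hlow : ∀ i, Λ ^ (-(1/β)) ≤ μ i * a i * x i := by
    intro i
    have h1 : (Λ : ℝ) ^ (-(1/β)) ≤ ((μ i * a i * x i) ^ (-β)) ^ (-(1/β)) :=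
      Real.rpow_le_rpow_of_nonpos (Real.rpow_pos_of_pos (hs i) _) (hkey i)
        (neg_nonpos.mpr (by positivity))
    calc Λ ^ (-(1/β)) ≤ ((μ i * a i * x i) ^ (-β)) ^ (-(1/β)) := h1
      _ = (μ i * a i * x i) ^ ((-β) * (-(1/β))) :=
        (Real.rpow_mul (hs i).le _ _).symm
      _ = μ i * a i * x i := by
        rw [show (-β) * (-(1/β)) = (1:ℝ) by field_simp, Real.rpow_one]
  -- Λ ≤ m * Λ ^ ((β-1)/β)
  have hub : Λ ≤ m * Λ ^ ((β - 1)/β) := by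
    have : ∀ i : Fin m, (μ i * a i * x i) ^ (1 - β) ≤ Λ ^ ((β - 1)/β) := by
      intro i
      have h1 : (Λ ^ (-(1/β))) ^ (1 - β) ≥ (μ i * a i * x i) ^ (1 - β) :=
        Real.rpow_le_rpow_of_nonpos (Real.rpow_pos_of_pos hΛpos _) (hlow i)
          (by linarith)
      calc (μ i * a i * x i) ^ (1 - β) ≤ (Λ ^ (-(1/β))) ^ (1 - β) := h1
        _ = Λ ^ ((-(1/β)) * (1 - β)) := (Real.rpow_mul hΛpos.le _ _).symm
        _ = Λ ^ ((β - 1)/β) := by congr 1; field_simp; ring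
    calc Λ = ∑ i, (μ i * a i * x i) ^ (1 - β) := hΛsum
      _ ≤ ∑ _i : Fin m, Λ ^ ((β - 1)/β) := Finset.sum_le_sum fun i _ => this i
      _ = m * Λ ^ ((β - 1)/β) := by
        rw [Finset.sum_const, Finset.card_univ, Fintype.card_fin, nsmul_eq_mul]
  -- Λ ^ (1/β) ≤ m
  have hΛfrac : Λ ^ ((1:ℝ)/β) ≤ m := by
    have hsplit : Λ = Λ ^ ((1:ℝ)/β) * Λ ^ ((β - 1)/β) := by
      rw [← Real.rpow_add hΛpos, show (1:ℝ)/β + (β-1)/β = 1 by field_simp; ring,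
        Real.rpow_one]
    have hpos2 : (0:ℝ) < Λ ^ ((β - 1)/β) := Real.rpow_pos_of_pos hΛpos _
    have := hub
    nth_rewrite 1 [hsplit] at this
    exact le_of_mul_le_mul_right this hpos2
  -- conclude
  intro i
  have hm1 : (1:ℝ) ≤ (m:ℝ) := by exact_mod_cast hm
  have h1 : Λ ^ (-(1/β)) = (Λ ^ ((1:ℝ)/β))⁻¹ := by
    rw [← Real.rpow_neg_one (Λ ^ ((1:ℝ)/β)), ← Real.rpow_mul hΛpos.le]
    norm_num
  have hpos3 : (0:ℝ) < Λ ^ ((1:ℝ)/β) := Real.rpow_pos_of_pos hΛpos _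
  calc (1:ℝ)/m ≤ (Λ ^ ((1:ℝ)/β))⁻¹ := by
        rw [one_div]
        exact inv_anti₀ hpos3 hΛfrac
    _ = Λ ^ (-(1/β)) := h1.symm
    _ ≤ μ i * a i * x i := hlow i
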